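/- The HOC function is nondecreasing in the threshold parameter c: for any 0 < c₁ ≤ c₂ and all x ∈ ℝ, l_{γ,c₁}(x) ≤ l_{γ,c₂}(x). -/

import Mathlib

/-- The hybrid ordinary-Cauchy (HOC) function with parameters `γ, c > 0`. -/
noncomputable def hoc (γ c x : ℝ) : ℝ :=
  if |x| ≤ c then x ^ 2 / 2
  else (γ ^ 2 + c ^ 2) / 2 * Real.log (1 + x ^ 2 / γ ^ 2) + c ^ 2 / 2 -
    (γ ^ 2 + c ^ 2) / 2 * Real.log (1 + c ^ 2 / γ ^ 2)

lemma hoc_log_split (γ t : ℝ) (hγ : 0 < γ) :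
    Real.log (1 + t ^ 2 / γ ^ 2) = Real.log (γ ^ 2 + t ^ 2) - Real.log (γ ^ 2) := by
  have hγ2 : (0:ℝ) < γ ^ 2 := by positivity
  have h1 : 1 + t ^ 2 / γ ^ 2 = (γ ^ 2 + t ^ 2) / γ ^ 2 := by field_simp
  rw [h1, Real.log_div (by positivity) (by positivity)]

lemma hoc_key (a b u : ℝ) (ha : 0 < a) (hab : a ≤ b) (hbu : b ≤ u) :
    b * Real.log b - a * Real.log a ≤ (b - a) * (Real.log u + 1) := by
  have hb : 0 < b := lt_of_lt_of_le ha hab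
  have h1 : Real.log b - Real.log a ≤ b / a - 1 := by
    rw [← Real.log_div (ne_of_gt hb) (ne_of_gt ha)]
    exact Real.log_le_sub_one_of_pos (by positivity)
  have h2 : Real.log b ≤ Real.log u := Real.log_le_log hb hbu
  have h1' : a * (Real.log b - Real.log a) ≤ b - a := by
    have := mul_le_mul_of_nonneg_left h1 (le_of_lt ha)
    have : a * (Real.log b - Real.log a) ≤ a * (b / a - 1) := this
    have heq : a * (b / a - 1) = b - a := by field_simp
    linarith [heq ▸ this]
  nlinarith [mul_le_mul_of_nonneg_left h2 (sub_nonneg.mpr hab)]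

/-- The HOC function is nondecreasing in the threshold parameter `c`:
for `0 < c₁ ≤ c₂` and all `x`, `l_{γ,c₁}(x) ≤ l_{γ,c₂}(x)`. -/
theorem hoc_mono_in_threshold (γ c₁ c₂ : ℝ) (hγ : 0 < γ)
    (hc₁ : 0 < c₁) (hc : c₁ ≤ c₂) :
    ∀ x : ℝ, hoc γ c₁ x ≤ hoc γ c₂ x := by
  intro x
  unfold hoc
  by_cases h1 : |x| ≤ c₁
  · rw [if_pos h1, if_pos (le_trans h1 hc)]
  · rw [if_neg h1]
    push_neg at h1
    have hx1 : c₁ ^ 2 < x ^ 2 := by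
      have : c₁ < |x| := h1
      nlinarith [abs_nonneg x, sq_abs x]
    by_cases h2 : |x| ≤ c₂
    · rw [if_pos h2]
      -- show HOC ≤ x^2/2
      have hlog : Real.log (1 + x ^ 2 / γ ^ 2) - Real.log (1 + c₁ ^ 2 / γ ^ 2)
          ≤ (x ^ 2 - c₁ ^ 2) / (γ ^ 2 + c₁ ^ 2) := by
        rw [hoc_log_split γ x hγ, hoc_log_split γ c₁ hγ]
        have h := Real.log_le_sub_one_of_pos
          (show (0:ℝ) < (γ ^ 2 + x ^ 2) / (γ ^ 2 + c₁ ^ 2) by positivity)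
        rw [Real.log_div (by positivity) (by positivity)] at h
        have heq : (γ ^ 2 + x ^ 2) / (γ ^ 2 + c₁ ^ 2) - 1 = (x ^ 2 - c₁ ^ 2) / (γ ^ 2 + c₁ ^ 2) := by
          field_simp
          ring
        linarith [heq ▸ h]
      have hpos : (0:ℝ) < γ ^ 2 + c₁ ^ 2 := by positivity
      have := mul_le_mul_of_nonneg_left hlog (le_of_lt hpos)
      have heq : (γ ^ 2 + c₁ ^ 2) * ((x ^ 2 - c₁ ^ 2) / (γ ^ 2 + c₁ ^ 2)) = x ^ 2 - c₁ ^ 2 := by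
        field_simp
      nlinarith
    · rw [if_neg h2]
      push_neg at h2
      have hx2 : c₂ ^ 2 < x ^ 2 := by
        have : c₂ < |x| := h2
        nlinarith [abs_nonneg x, sq_abs x, hc₁.le.trans hc]
      have key := hoc_key (γ ^ 2 + c₁ ^ 2) (γ ^ 2 + c₂ ^ 2) (γ ^ 2 + x ^ 2)
        (by positivity) (by nlinarith) (by nlinarith)
      rw [hoc_log_split γ x hγ, hoc_log_split γ c₁ hγ, hoc_log_split γ c₂ hγ]
      nlinarith [key]
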